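/- Let c > 0, M < 2c, and let φ : ℝ → ℝ be continuous, nonnegative, with 0 ≤ φ ≤ M, satisfying 2cφ − φ² = 3K∗φ² with K(x) = (1/2)e^{−|x|}. Suppose moreover that x ↦ e^{|x|/2} φ(x) belongs to L²(ℝ). Then x ↦ e^{|x|} φ(x) is bounded on ℝ. -/

import Mathlib

open Real MeasureTheory

theorem exponential_decay_bootstrap (c M : ℝ) (hc : 0 < c) (hM : M < 2 * c)
    (φ : ℝ → ℝ) (hφ_cont : Continuous φ)
    (hφ_bound : ∀ x, 0 ≤ φ x ∧ φ x ≤ M)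
    (heq : ∀ x, 2 * c * φ x - (φ x) ^ 2
      = 3 * ∫ y : ℝ, (1 / 2) * Real.exp (-|x - y|) * (φ y) ^ 2)
    (hL2 : MemLp (fun x => Real.exp (|x| / 2) * φ x) 2 volume) :
    ∃ C, ∀ x, Real.exp |x| * φ x ≤ C := by
  have hsq : Integrable (fun y => (Real.exp (|y| / 2) * φ y) ^ 2) volume :=
    hL2.integrable_sq
  set J := ∫ y : ℝ, (Real.exp (|y| / 2) * φ y) ^ 2 with hJdef
  have hM2 : 0 < 2 * c - M := by linarith
  refine ⟨3 * ((1 / 2) * J) / (2 * c - M), fun x => ?_⟩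
  have h1 : (2 * c - M) * φ x
      ≤ 3 * ∫ y : ℝ, (1 / 2) * Real.exp (-|x - y|) * (φ y) ^ 2 := by
    have h := heq x
    nlinarith [(hφ_bound x).1, (hφ_bound x).2]
  have h2 : Real.exp |x| * ∫ y : ℝ, (1 / 2) * Real.exp (-|x - y|) * (φ y) ^ 2
      ≤ (1 / 2) * J := by
    rw [← integral_const_mul]
    have hJ : (1 / 2) * J = ∫ y : ℝ, (1 / 2) * (Real.exp (|y| / 2) * φ y) ^ 2 :=
      (integral_const_mul _ _).symm
    rw [hJ]
    apply integral_mono_of_nonneg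
    · filter_upwards with y
      have := (hφ_bound y).1
      positivity
    · exact hsq.const_mul _
    · filter_upwards with y
      have htri : |x| ≤ |x - y| + |y| := by
        calc |x| = |(x - y) + y| := by ring_nf
        _ ≤ |x - y| + |y| := abs_add_le _ _
      have hexp : Real.exp |x| * Real.exp (-|x - y|) ≤ Real.exp |y| := by
        rw [← Real.exp_add]
        exact Real.exp_le_exp.2 (by linarith)
      have hfy : (Real.exp (|y| / 2) * φ y) ^ 2 = Real.exp |y| * φ y ^ 2 := by
        rw [mul_pow, sq (Real.exp _), ← Real.exp_add]
        ring_nf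
      have hφ2 : (0:ℝ) ≤ φ y ^ 2 := sq_nonneg _
      calc Real.exp |x| * ((1 / 2) * Real.exp (-|x - y|) * φ y ^ 2)
          = (1 / 2) * ((Real.exp |x| * Real.exp (-|x - y|)) * φ y ^ 2) := by ring
        _ ≤ (1 / 2) * (Real.exp |y| * φ y ^ 2) := by
            have := mul_le_mul_of_nonneg_right hexp hφ2
            linarith
        _ = (1 / 2) * (Real.exp (|y| / 2) * φ y) ^ 2 := by rw [hfy]
  have hex := Real.exp_pos |x|
  have h1' := mul_le_mul_of_nonneg_left h1 hex.le
  rw [le_div_iff₀ hM2]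
  nlinarith [h1', h2]
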